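/- Under the setup of the previous context, P(f(μ) ≤ f(τ)) = Q((‖s‖² − Re(s_τ^H s_μ)) / √(((1+ρ)/2) ‖s_μ − s_τ‖²)), where Q is the standard normal tail function. -/

import Mathlib

open MeasureTheory Real

/-- The circular complex Gaussian `CN(0, 2v)`: real and imaginary parts independent `N(0, v)`. -/
noncomputable def complexGaussian (v : NNReal) : Measure ℂ :=
  ((ProbabilityTheory.gaussianReal 0 v).prod (ProbabilityTheory.gaussianReal 0 v)).map
    (fun p => (p.1 : ℂ) + p.2 * Complex.I)

open ProbabilityTheory
open scoped ENNReal NNReal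

lemma conv_pdf_real (a b : ℝ) (ha : 0 < a) (hb : 0 < b) (z : ℝ) :
    ∫ x, (√(2*π*a))⁻¹ * rexp (-x^2/(2*a)) * ((√(2*π*b))⁻¹ * rexp (-(z-x)^2/(2*b))) =
      (√(2*π*(a+b)))⁻¹ * rexp (-z^2/(2*(a+b))) := by
  have hab : 0 < a + b := by linarith
  have hpi := Real.pi_pos
  have hexp : ∀ x : ℝ, rexp (-x^2/(2*a)) * rexp (-(z-x)^2/(2*b)) =
      rexp (-z^2/(2*(a+b))) * rexp (-((a+b)/(2*a*b))*(x - a*z/(a+b))^2) := by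
    intro x
    rw [← Real.exp_add, ← Real.exp_add]
    congr 1
    field_simp
    ring
  have hptwise : ∀ x : ℝ, (√(2*π*a))⁻¹ * rexp (-x^2/(2*a)) * ((√(2*π*b))⁻¹ * rexp (-(z-x)^2/(2*b)))
      = ((√(2*π*a))⁻¹ * (√(2*π*b))⁻¹ * rexp (-z^2/(2*(a+b)))) *
          rexp (-((a+b)/(2*a*b))*(x - a*z/(a+b))^2) := by
    intro x
    rw [mul_mul_mul_comm, hexp x]
    ring
  rw [integral_congr_ae (ae_of_all _ hptwise), integral_const_mul,
    integral_sub_right_eq_self (fun x => rexp (-((a+b)/(2*a*b))*x^2)) (a*z/(a+b)),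
    integral_gaussian]
  have hC : (√(2*π*a))⁻¹ * (√(2*π*b))⁻¹ * √(π/((a+b)/(2*a*b))) = (√(2*π*(a+b)))⁻¹ := by
    rw [← Real.sqrt_inv (2*π*a), ← Real.sqrt_inv (2*π*b),
      ← Real.sqrt_mul (by positivity), ← Real.sqrt_mul (by positivity),
      ← Real.sqrt_inv (2*π*(a+b))]
    congr 1
    field_simp
  linear_combination rexp (-z^2/(2*(a+b))) * hC

lemma gaussianPDFReal_le (μ : ℝ) (v : ℝ≥0) (x : ℝ) :
    gaussianPDFReal μ v x ≤ (√(2*π*v))⁻¹ := by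
  rw [gaussianPDFReal]
  have : rexp (-(x - μ)^2/(2*v)) ≤ 1 := by
    rw [Real.exp_le_one_iff]
    exact div_nonpos_iff.2 (Or.inr ⟨neg_nonpos.2 (sq_nonneg _), by positivity⟩)
  nlinarith [Real.sqrt_nonneg (2*π*v), inv_nonneg.2 (Real.sqrt_nonneg (2*π*v))]

lemma gaussianPDFReal_conv {v₁ v₂ : ℝ≥0} (hv₁ : v₁ ≠ 0) (hv₂ : v₂ ≠ 0) (z : ℝ) :
    ∫ x, gaussianPDFReal 0 v₁ x * gaussianPDFReal 0 v₂ (z - x) =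
      gaussianPDFReal 0 (v₁ + v₂) z := by
  have ha : (0:ℝ) < v₁ := lt_of_le_of_ne v₁.coe_nonneg (by exact_mod_cast (Ne.symm hv₁))
  have hb : (0:ℝ) < v₂ := lt_of_le_of_ne v₂.coe_nonneg (by exact_mod_cast (Ne.symm hv₂))
  have := conv_pdf_real v₁ v₂ ha hb z
  simp only [gaussianPDFReal, sub_zero, NNReal.coe_add]
  convert this using 2 <;> push_cast <;> ring_nf

lemma integrable_conv {v₁ v₂ : ℝ≥0} (z : ℝ) :
    Integrable (fun x => gaussianPDFReal 0 v₁ x * gaussianPDFReal 0 v₂ (z - x)) := by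
  have : Integrable (fun x => gaussianPDFReal 0 v₂ (z - x) * gaussianPDFReal 0 v₁ x) := by
    refine Integrable.bdd_mul (c := (√(2*π*v₂))⁻¹) (integrable_gaussianPDFReal 0 v₁) ?_ (ae_of_all _ ?_)
    · exact ((measurable_gaussianPDFReal 0 v₂).comp
        (measurable_const.sub measurable_id)).aestronglyMeasurable
    · intro x
      rw [Real.norm_of_nonneg (gaussianPDFReal_nonneg _ _ _)]
      exact gaussianPDFReal_le _ _ _
  simpa [mul_comm] using this

lemma gaussianPDF_conv {v₁ v₂ : ℝ≥0} (hv₁ : v₁ ≠ 0) (hv₂ : v₂ ≠ 0) (z : ℝ) :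
    ∫⁻ x, gaussianPDF 0 v₁ x * gaussianPDF 0 v₂ (z - x) = gaussianPDF 0 (v₁ + v₂) z := by
  simp only [gaussianPDF]
  simp_rw [← ENNReal.ofReal_mul (gaussianPDFReal_nonneg 0 v₁ _)]
  rw [← gaussianPDFReal_conv hv₁ hv₂ z,
    ← ofReal_integral_eq_lintegral_ofReal (integrable_conv z)
      (ae_of_all _ fun x => mul_nonneg (gaussianPDFReal_nonneg _ _ _) (gaussianPDFReal_nonneg _ _ _))]

lemma gaussian_conv (v₁ v₂ : ℝ≥0) :
    ((gaussianReal 0 v₁).prod (gaussianReal 0 v₂)).map (fun p : ℝ × ℝ => p.1 + p.2) =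
      gaussianReal 0 (v₁ + v₂) := by
  by_cases hv₁ : v₁ = 0
  · subst hv₁
    rw [gaussianReal_zero_var, Measure.dirac_prod, Measure.map_map measurable_add measurable_prodMk_left]
    simp [Function.comp_def]
  by_cases hv₂ : v₂ = 0
  · subst hv₂
    rw [gaussianReal_zero_var, Measure.prod_dirac, Measure.map_map measurable_add measurable_prodMk_right]
    simp [Function.comp_def]
  have hv : v₁ + v₂ ≠ 0 := by simp [hv₁]
  rw [gaussianReal_of_var_ne_zero 0 hv₁, gaussianReal_of_var_ne_zero 0 hv₂,
    gaussianReal_of_var_ne_zero 0 hv]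
  set f := gaussianPDF 0 v₁ with hf
  set g := gaussianPDF 0 v₂ with hg
  have hfm : Measurable f := measurable_gaussianPDF 0 v₁
  have hgm : Measurable g := measurable_gaussianPDF 0 v₂
  ext s hs
  rw [Measure.map_apply measurable_add hs, withDensity_apply _ hs]
  have hpre : MeasurableSet ((fun p : ℝ × ℝ => p.1 + p.2) ⁻¹' s) := measurable_add hs
  rw [Measure.prod_apply hpre]
  have hslice : ∀ x : ℝ, (volume.withDensity g) (Prod.mk x ⁻¹' ((fun p : ℝ × ℝ => p.1 + p.2) ⁻¹' s))
      = ∫⁻ y, s.indicator (fun _ => (1:ℝ≥0∞)) (x + y) * g y := by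
    intro x
    have hmeas : MeasurableSet {y : ℝ | x + y ∈ s} := (measurable_const_add x) hs
    rw [show Prod.mk x ⁻¹' ((fun p : ℝ × ℝ => p.1 + p.2) ⁻¹' s) = {y : ℝ | x + y ∈ s} from rfl,
      withDensity_apply _ hmeas, ← lintegral_indicator hmeas]
    congr 1 with y
    by_cases hy : x + y ∈ s <;> simp [Set.indicator_apply, hy]
  simp_rw [hslice]
  rw [lintegral_withDensity_eq_lintegral_mul _ hfm]
  · have hshift : ∀ x : ℝ, (∫⁻ y, s.indicator (fun _ => (1:ℝ≥0∞)) (x + y) * g y)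
        = ∫⁻ z, s.indicator (fun _ => (1:ℝ≥0∞)) z * g (z - x) := by
      intro x
      rw [← lintegral_add_right_eq_self (fun z => s.indicator (fun _ => (1:ℝ≥0∞)) z * g (z - x)) x]
      congr 1 with y
      simp [add_comm, add_sub_cancel_right]
    simp only [Pi.mul_apply]
    simp_rw [hshift]
    have hpull : ∀ x, f x * (∫⁻ z, s.indicator (fun _ => (1:ℝ≥0∞)) z * g (z - x))
        = ∫⁻ z, f x * (s.indicator (fun _ => (1:ℝ≥0∞)) z * g (z - x)) := fun x =>
      (lintegral_const_mul _ ((((measurable_indicator_const_iff 1).2 hs)).mul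
        (hgm.comp (measurable_id.sub_const x)))).symm
    simp_rw [hpull]
    rw [lintegral_lintegral_swap]
    · have : ∀ z, (∫⁻ x, f x * (s.indicator (fun _ => (1:ℝ≥0∞)) z * g (z - x)))
          = s.indicator (fun _ => (1:ℝ≥0∞)) z * gaussianPDF 0 (v₁ + v₂) z := by
        intro z
        have hm2 : Measurable fun x => f x * g (z - x) :=
          hfm.mul (hgm.comp (measurable_const.sub measurable_id))
        rw [← gaussianPDF_conv hv₁ hv₂ z, ← lintegral_const_mul _ hm2]
        congr 1 with x
        ring
      simp_rw [this]
      rw [← lintegral_indicator hs]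
      congr 1 with z
      by_cases hz : z ∈ s <;> simp [Set.indicator_apply, hz]
    · apply Measurable.aemeasurable
      apply Measurable.mul (hfm.comp measurable_fst)
      apply Measurable.mul
      · exact (measurable_indicator_const_iff 1).2 hs |>.comp measurable_snd
      · exact hgm.comp (measurable_snd.sub measurable_fst)
  · apply Measurable.lintegral_prod_right (f := fun x y => s.indicator (fun _ => (1:ℝ≥0∞)) (x + y) * g y)
    apply Measurable.mul
    · exact ((measurable_indicator_const_iff 1).2 hs).comp measurable_add
    · exact hgm.comp measurable_snd

lemma pi_map_sum : ∀ (n : ℕ) (α : Fin n → Type) (_ : ∀ i, MeasurableSpace (α i))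
    (μ : ∀ i, Measure (α i)) (_ : ∀ i, IsProbabilityMeasure (μ i))
    (X : ∀ i, α i → ℝ) (_ : ∀ i, Measurable (X i)) (w : Fin n → ℝ≥0)
    (_ : ∀ i, (μ i).map (X i) = gaussianReal 0 (w i)),
    (Measure.pi μ).map (fun y => ∑ i, X i (y i)) = gaussianReal 0 (∑ i, w i) := by
  intro n
  induction n with
  | zero =>
    intro α _ μ _ X hX w h
    simp only [Finset.univ_eq_empty, Finset.sum_empty]
    rw [gaussianReal_zero_var]
    exact Measure.map_const _ 0 |>.trans (by simp)
  | succ n ih =>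
    intro α mα μ hμ X hX w h
    have hmp := measurePreserving_piFinSuccAbove μ 0
    set e := MeasurableEquiv.piFinSuccAbove α 0 with he
    have hcomp : (fun y : ∀ i, α i => ∑ i, X i (y i)) =
        (fun p : α 0 × (∀ j, α ((0 : Fin (n+1)).succAbove j)) =>
          X 0 p.1 + ∑ j, X ((0 : Fin (n+1)).succAbove j) (p.2 j)) ∘ e := by
      funext y
      rw [Function.comp_apply]
      exact Fin.sum_univ_succAbove (fun i => X i (y i)) 0
    have hGm : Measurable (fun p : α 0 × (∀ j, α ((0 : Fin (n+1)).succAbove j)) =>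
        X 0 p.1 + ∑ j, X ((0 : Fin (n+1)).succAbove j) (p.2 j)) := by
      apply Measurable.add ((hX 0).comp measurable_fst)
      exact Finset.measurable_sum _ fun j _ =>
        (hX _).comp ((measurable_pi_apply j).comp measurable_snd)
    rw [hcomp, ← Measure.map_map hGm e.measurable, hmp.map_eq]
    have htail : (Measure.pi fun j => μ ((0 : Fin (n+1)).succAbove j)).map
        (fun y => ∑ j, X ((0 : Fin (n+1)).succAbove j) (y j)) =
        gaussianReal 0 (∑ j, w ((0 : Fin (n+1)).succAbove j)) :=
      ih _ _ _ (fun j => hμ _) _ (fun j => hX _) _ (fun j => h _)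
    have hdecomp : (fun p : α 0 × (∀ j, α ((0 : Fin (n+1)).succAbove j)) =>
        X 0 p.1 + ∑ j, X ((0 : Fin (n+1)).succAbove j) (p.2 j)) =
        (fun q : ℝ × ℝ => q.1 + q.2) ∘ (Prod.map (X 0)
          (fun y => ∑ j, X ((0 : Fin (n+1)).succAbove j) (y j))) := rfl
    have hsum : Measurable (fun y : ∀ j, α ((0 : Fin (n+1)).succAbove j) =>
        ∑ j, X ((0 : Fin (n+1)).succAbove j) (y j)) :=
      Finset.measurable_sum _ fun j _ => (hX _).comp (measurable_pi_apply j)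
    rw [hdecomp, ← Measure.map_map measurable_add ((hX 0).prodMap hsum),
      ← Measure.map_prod_map _ _ (hX 0) hsum, h 0, htail, gaussian_conv]
    rw [Fin.sum_univ_succAbove w 0]

lemma measurable_mk : Measurable (fun p : ℝ × ℝ => (p.1 : ℂ) + p.2 * Complex.I) :=
  (Complex.measurable_ofReal.comp measurable_fst).add
    ((Complex.measurable_ofReal.comp measurable_snd).mul_const _)

instance (v : NNReal) : IsProbabilityMeasure (complexGaussian v) :=
  Measure.isProbabilityMeasure_map measurable_mk.aemeasurable

lemma complexGaussian_map (v : ℝ≥0) (c : ℂ) :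
    (complexGaussian v).map (fun z => c.re * z.re + c.im * z.im)
      = gaussianReal 0 (Real.toNNReal (‖c‖^2) * v) := by
  have hXm : Measurable (fun z : ℂ => c.re * z.re + c.im * z.im) :=
    ((Complex.measurable_re.const_mul _).add (Complex.measurable_im.const_mul _))
  rw [complexGaussian, Measure.map_map hXm measurable_mk]
  have h1 : (fun z : ℂ => c.re * z.re + c.im * z.im) ∘ (fun p : ℝ×ℝ => (p.1:ℂ) + p.2*Complex.I)
      = fun p : ℝ × ℝ => c.re * p.1 + c.im * p.2 := by
    funext p; simp
  rw [h1]
  have h2 : (fun p : ℝ×ℝ => c.re * p.1 + c.im * p.2)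
      = (fun q : ℝ×ℝ => q.1 + q.2) ∘ Prod.map (c.re * ·) (c.im * ·) := rfl
  rw [h2, ← Measure.map_map measurable_add
      ((measurable_const_mul _).prodMap (measurable_const_mul _)),
    ← Measure.map_prod_map _ _ (measurable_const_mul _) (measurable_const_mul _),
    gaussianReal_map_const_mul, gaussianReal_map_const_mul, mul_zero, mul_zero, gaussian_conv]
  congr 1
  apply NNReal.coe_injective
  push_cast [Real.coe_toNNReal _ (by positivity : (0:ℝ) ≤ ‖c‖^2)]
  have : ‖c‖^2 = c.re^2 + c.im^2 := by
    rw [Complex.sq_norm, Complex.normSq_apply]; ring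
  rw [this]; ring

lemma gaussian_tail (V : ℝ≥0) (hV : V ≠ 0) (c0 : ℝ) :
    gaussianReal 0 V (Set.Iic (-c0)) = gaussianReal 0 1 (Set.Ioi (c0 / Real.sqrt V)) := by
  have hVpos : (0:ℝ) < V := lt_of_le_of_ne V.coe_nonneg (by exact_mod_cast (Ne.symm hV))
  set σ := Real.sqrt (V:ℝ) with hσdef
  have hσ : 0 < σ := Real.sqrt_pos.2 hVpos
  have hmap : (gaussianReal 0 V).map ((-σ⁻¹) * ·) = gaussianReal 0 1 := by
    rw [gaussianReal_map_const_mul, mul_zero]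
    congr 1
    apply NNReal.coe_injective
    push_cast
    rw [neg_pow, show ((-1:ℝ)^2 * σ⁻¹^2) = (σ^2)⁻¹ by ring, hσdef, Real.sq_sqrt V.coe_nonneg]
    field_simp
  rw [← hmap, Measure.map_apply (measurable_const_mul _) measurableSet_Ioi]
  have hset : ((-σ⁻¹) * ·) ⁻¹' (Set.Ioi (c0/σ)) = Set.Iio (-c0) := by
    ext x
    simp only [Set.mem_preimage, Set.mem_Ioi, Set.mem_Iio]
    rw [show -σ⁻¹ * x = (-x)/σ by field_simp, div_lt_div_iff_of_pos_right hσ]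
    constructor <;> intro <;> linarith
  rw [hset]
  have hsing : gaussianReal 0 V {(-c0 : ℝ)} = 0 :=
    gaussianReal_absolutelyContinuous 0 hV Real.volume_singleton
  rw [← Set.Iio_union_right, measure_union (by simp) (measurableSet_singleton _), hsing, add_zero]

/-- under the setup of Statement 13 (with `s_τ ≠ s_{μ₀}`),
`P(f(μ₀) ≤ f(τ)) = Q((‖s‖² − Re(s_τᴴ s_{μ₀})) / √(((1+ρ)/2) ‖s_{μ₀} − s_τ‖²))`,
where `Q(x) = P(N(0,1) > x)` is the standard normal tail function. -/
theorem stmt14 (n : ℕ) (hn : 1 ≤ n) (ρ : ℝ) (hρ : 0 ≤ ρ)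
    (s : Fin n → ℂ) (μ₀ τ : Fin n) (hτμ : τ ≠ μ₀)
    (hshift : (fun i => s (i - τ)) ≠ (fun i => s (i - μ₀)))
    (μY : Measure (Fin n → ℂ))
    (hY : μY = Measure.pi (fun _ : Fin n => complexGaussian (Real.toNNReal ((1 + ρ) / 2))))
    (f : Fin n → (Fin n → ℂ) → ℝ)
    (hf : ∀ t y, f t y = (∑ i, (starRingEnd ℂ) (s (i - t)) * (s (i - μ₀) + y i)).re) :
    μY {y | f μ₀ y ≤ f τ y} =
      ProbabilityTheory.gaussianReal 0 1 (Set.Ioi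
        (((∑ i, ‖s i‖ ^ 2) - (∑ i, (starRingEnd ℂ) (s (i - τ)) * s (i - μ₀)).re)
          / Real.sqrt ((1 + ρ) / 2 * ∑ i, ‖s (i - μ₀) - s (i - τ)‖ ^ 2))) := by
  classical
  haveI : NeZero n := ⟨by omega⟩
  set v : ℝ≥0 := Real.toNNReal ((1 + ρ) / 2) with hvdef
  have hv' : ((v : ℝ)) = (1 + ρ) / 2 := Real.coe_toNNReal _ (by linarith)
  set d : Fin n → ℂ := fun i => s (i - μ₀) - s (i - τ) with hd
  set X : Fin n → ℂ → ℝ := fun i z => (d i).re * z.re + (d i).im * z.im with hXdef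
  set w : Fin n → ℝ≥0 := fun i => Real.toNNReal (‖d i‖ ^ 2) * v with hwdef
  have hXm : ∀ i, Measurable (X i) := fun i =>
    (Complex.measurable_re.const_mul _).add (Complex.measurable_im.const_mul _)
  have hTm : Measurable (fun y : Fin n → ℂ => ∑ i, X i (y i)) :=
    Finset.measurable_sum _ fun i _ => (hXm i).comp (measurable_pi_apply i)
  have hmap : μY.map (fun y => ∑ i, X i (y i)) = gaussianReal 0 (∑ i, w i) := by
    rw [hY]
    exact pi_map_sum n (fun _ => ℂ) (fun _ => inferInstance) (fun _ => complexGaussian v)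
      (fun _ => inferInstance) X hXm w (fun i => complexGaussian_map v (d i))
  set c0 : ℝ := (∑ i, (starRingEnd ℂ) (d i) * s (i - μ₀)).re with hc0def
  have hXre : ∀ i (z : ℂ), X i z = ((starRingEnd ℂ) (d i) * z).re := by
    intro i z
    simp [X, Complex.mul_re, Complex.conj_re, Complex.conj_im]
    try ring
  have hkey : ∀ y, f μ₀ y = f τ y + (c0 + ∑ i, X i (y i)) := by
    intro y
    rw [hf, hf]
    have hterm : ∀ i, (starRingEnd ℂ) (s (i - μ₀)) * (s (i - μ₀) + y i) =
        (starRingEnd ℂ) (s (i - τ)) * (s (i - μ₀) + y i) +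
          ((starRingEnd ℂ) (d i) * s (i - μ₀) + (starRingEnd ℂ) (d i) * y i) := by
      intro i
      simp only [hd, map_sub]
      ring
    rw [Finset.sum_congr rfl fun i _ => hterm i, Finset.sum_add_distrib,
      Finset.sum_add_distrib, Complex.add_re, Complex.add_re]
    have : ∑ i, X i (y i) = (∑ i, (starRingEnd ℂ) (d i) * y i).re := by
      rw [Complex.re_sum]
      exact Finset.sum_congr rfl fun i _ => hXre i (y i)
    rw [this, hc0def]
    try ring
  have hset : {y : Fin n → ℂ | f μ₀ y ≤ f τ y}
      = (fun y => ∑ i, X i (y i)) ⁻¹' (Set.Iic (-c0)) := by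
    ext y
    simp only [Set.mem_setOf_eq, Set.mem_preimage, Set.mem_Iic, hkey y]
    constructor <;> intro <;> linarith
  -- positivity of the variance
  obtain ⟨i₀, hi₀⟩ := Function.ne_iff.1 hshift
  have hdne : d i₀ ≠ 0 := sub_ne_zero.2 (Ne.symm hi₀)
  have hsumpos : 0 < ∑ i, ‖d i‖ ^ 2 := by
    apply Finset.sum_pos' (fun i _ => by positivity)
    exact ⟨i₀, Finset.mem_univ _, pow_pos (norm_pos_iff.mpr hdne) 2⟩
  have hVcoe : ((∑ i, w i : ℝ≥0) : ℝ) = (1 + ρ) / 2 * ∑ i, ‖d i‖ ^ 2 := by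
    push_cast [hwdef]
    have hco : ∀ x : Fin n, ((‖d x‖ ^ 2).toNNReal : ℝ) = ‖d x‖ ^ 2 :=
      fun x => Real.coe_toNNReal _ (by positivity)
    simp_rw [hco, hv']
    rw [← Finset.sum_mul]
    ring
  have hVne : (∑ i, w i) ≠ 0 := by
    have hpos : (0:ℝ) < ((∑ i, w i : ℝ≥0) : ℝ) := by
      rw [hVcoe]; nlinarith
    intro h
    rw [h] at hpos
    simp at hpos
  have hnum : c0 = (∑ i, ‖s i‖ ^ 2) - (∑ i, (starRingEnd ℂ) (s (i - τ)) * s (i - μ₀)).re := by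
    rw [hc0def]
    have hterm2 : ∀ i, (starRingEnd ℂ) (d i) * s (i - μ₀) =
        (starRingEnd ℂ) (s (i - μ₀)) * s (i - μ₀) - (starRingEnd ℂ) (s (i - τ)) * s (i - μ₀) := by
      intro i; simp only [hd, map_sub]; ring
    rw [Finset.sum_congr rfl fun i _ => hterm2 i, Finset.sum_sub_distrib, Complex.sub_re]
    congr 1
    have h1 : ∀ z : ℂ, ((starRingEnd ℂ) z * z).re = ‖z‖ ^ 2 := by
      intro z
      rw [Complex.sq_norm, Complex.normSq_apply, Complex.mul_re]
      simp [Complex.conj_re, Complex.conj_im]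
      try ring
    rw [Complex.re_sum, Finset.sum_congr rfl fun i _ => h1 (s (i - μ₀))]
    exact Fintype.sum_equiv (Equiv.subRight μ₀) _ _ (fun i => rfl)
  rw [hset, ← Measure.map_apply hTm measurableSet_Iic, hmap, gaussian_tail _ hVne c0,
    hVcoe, hnum]
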